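/- Let H be the graph constructed from G and ℓ, with target sets X and Y of size ℓ, and let k_c ∈ ℕ. If opt(G) ≤ k_c, then opt_H(X ⇝ Y) ≤ k_c + ℓ. -/

import Mathlib

namespace TSS

variable {V : Type*}

/-- The set of active vertices after `i` steps of the activation process started from `S`. -/
def activeAt (G : SimpleGraph V) (τ : V → ℕ) (S : Set V) : ℕ → Set V
  | 0 => S
  | i + 1 => activeAt G τ S i ∪ { v | τ v ≤ (G.neighborSet v ∩ activeAt G τ S i).ncard }

/-- The active vertex set `𝒜(S) = ⋃ i, 𝒜ⁱ(S)`. -/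
def activeSet (G : SimpleGraph V) (τ : V → ℕ) (S : Set V) : Set V :=
  ⋃ i, activeAt G τ S i

/-- `S` is a target set for `(G, τ)` if it activates every vertex. -/
def IsTargetSet (G : SimpleGraph V) (τ : V → ℕ) (S : Set V) : Prop :=
  activeSet G τ S = Set.univ

/-- Minimum size of a target set. -/
noncomputable def optTS (G : SimpleGraph V) (τ : V → ℕ) : ℕ :=
  sInf { m | ∃ S : Set V, IsTargetSet G τ S ∧ S.ncard = m }

/-- A reconfiguration sequence `Sfam 0 = X, …, Sfam T = Y` of target sets where
consecutive sets differ in exactly one vertex. -/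
structure IsReconfSeq (G : SimpleGraph V) (τ : V → ℕ) (X Y : Set V) (T : ℕ)
    (Sfam : ℕ → Set V) : Prop where
  head : Sfam 0 = X
  last : Sfam T = Y
  target : ∀ t ≤ T, IsTargetSet G τ (Sfam t)
  step : ∀ t < T, (symmDiff (Sfam t) (Sfam (t + 1))).ncard = 1

/-- The size of a reconfiguration sequence: maximum cardinality of any member. -/
noncomputable def seqSize (T : ℕ) (Sfam : ℕ → Set V) : ℕ :=
  (Finset.range (T + 1)).sup fun t => (Sfam t).ncard

/-- `opt_G(X ⇝ Y)`: minimum size over all reconfiguration sequences from `X` to `Y`. -/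
noncomputable def optReconf (G : SimpleGraph V) (τ : V → ℕ) (X Y : Set V) : ℕ :=
  sInf { m | ∃ T Sfam, IsReconfSeq G τ X Y T Sfam ∧ seqSize T Sfam = m }

/-- The four internal vertices of a one-way gadget. -/
inductive GadVert where | t | h | b1 | b2

/-- Index set of the one-way gadgets of the graph `H` built from `G` (with degree
function `d`) and `ℓ`. -/
inductive GadIdx (V : Type*) (ℓ : ℕ) (d : V → ℕ) where
  | vx (v : V) (i : Fin ℓ)
  | xa (i : Fin ℓ) (v : V) (j : Fin (d v))
  | av (v : V) (j : Fin (d v))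
  | vy (v : V) (i : Fin ℓ)
  | yb (i : Fin ℓ) (v : V) (j : Fin (d v))
  | bv (v : V) (j : Fin (d v))

/-- Vertices of the graph `H`: a copy of `V`, the sets `X`, `Y`, `A`, `B`, and the
internal vertices of all one-way gadgets. -/
inductive HVert (V : Type*) (ℓ : ℕ) (d : V → ℕ) where
  | orig (v : V)
  | xx (i : Fin ℓ)
  | yy (i : Fin ℓ)
  | aa (v : V) (j : Fin (d v))
  | bb (v : V) (j : Fin (d v))
  | gad (D : GadIdx V ℓ d) (w : GadVert)

variable {ℓ : ℕ} {d : V → ℕ}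

/-- The tail of a one-way gadget. -/
def gadTail : GadIdx V ℓ d → HVert V ℓ d
  | .vx v _ => .orig v
  | .xa i _ _ => .xx i
  | .av v j => .aa v j
  | .vy v _ => .orig v
  | .yb i _ _ => .yy i
  | .bv v j => .bb v j

/-- The head of a one-way gadget. -/
def gadHead : GadIdx V ℓ d → HVert V ℓ d
  | .vx _ i => .xx i
  | .xa _ v j => .aa v j
  | .av v _ => .orig v
  | .vy _ i => .yy i
  | .yb _ v j => .bb v j
  | .bv v _ => .orig v

/-- Base edge relation of the graph `H`. -/
def HRel (G : SimpleGraph V) (ℓ : ℕ) (d : V → ℕ) : HVert V ℓ d → HVert V ℓ d → Prop :=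
  fun p q =>
    (∃ u v, G.Adj u v ∧ p = .orig u ∧ q = .orig v) ∨
    (∃ D, p = .gad D .t ∧ (q = .gad D .b1 ∨ q = .gad D .b2)) ∨
    (∃ D, p = .gad D .h ∧ (q = .gad D .b1 ∨ q = .gad D .b2)) ∨
    (∃ D, p = gadTail D ∧ q = .gad D .t) ∨
    (∃ D, p = gadHead D ∧ q = .gad D .h)

/-- The graph `H` constructed from `G` (with degree function `d`) and `ℓ`. -/
def graphH (G : SimpleGraph V) (ℓ : ℕ) (d : V → ℕ) : SimpleGraph (HVert V ℓ d) :=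
  SimpleGraph.fromRel (HRel G ℓ d)

/-- The threshold function `τ'` of `H`, where `n` is the number of vertices of `G`. -/
def tauH (τ : V → ℕ) (n ℓ : ℕ) (d : V → ℕ) : HVert V ℓ d → ℕ
  | .orig v => τ v
  | .xx _ => n
  | .yy _ => n
  | .aa _ _ => ℓ
  | .bb _ _ => ℓ
  | .gad _ .t => 1
  | .gad _ .b1 => 1
  | .gad _ .b2 => 1
  | .gad _ .h => 2

/-- The vertex set `X = {x₁, …, x_ℓ}` of `H`. -/
def XSet (V : Type*) (ℓ : ℕ) (d : V → ℕ) : Set (HVert V ℓ d) := Set.range HVert.xx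

/-- The vertex set `Y = {y₁, …, y_ℓ}` of `H`. -/
def YSet (V : Type*) (ℓ : ℕ) (d : V → ℕ) : Set (HVert V ℓ d) := Set.range HVert.yy

/-- The copy of `V` inside `V(H)`. -/
def OrigSet (V : Type*) (ℓ : ℕ) (d : V → ℕ) : Set (HVert V ℓ d) := Set.range HVert.orig

/-- The vertex set `A = {a_{v,j}}` of `H`. -/
def ASet (V : Type*) (ℓ : ℕ) (d : V → ℕ) : Set (HVert V ℓ d) :=
  { p | ∃ v j, p = HVert.aa v j }

/-- The vertex set `B = {b_{v,j}}` of `H`. -/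
def BSet (V : Type*) (ℓ : ℕ) (d : V → ℕ) : Set (HVert V ℓ d) :=
  { p | ∃ v j, p = HVert.bb v j }

end TSS

/-! Auxiliary machinery -/
section Aux

open TSS

namespace TSS
variable {W : Type*}

/-- Finiteness helpers -/
private def gvEnc : GadVert → Fin 4
  | .t => 0 | .h => 1 | .b1 => 2 | .b2 => 3

instance : Finite GadVert := by
  apply Finite.of_injective gvEnc
  intro a b hab
  cases a <;> cases b <;> first | rfl | exact absurd hab (by decide)

variable {V : Type*} {ℓ : ℕ} {d : V → ℕ}

private def giEnc : GadIdx V ℓ d →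
    (V × Fin ℓ) ⊕ (Fin ℓ × Σ v, Fin (d v)) ⊕ (Σ v, Fin (d v)) ⊕
    (V × Fin ℓ) ⊕ (Fin ℓ × Σ v, Fin (d v)) ⊕ (Σ v, Fin (d v))
  | .vx v i => .inl (v, i)
  | .xa i v j => .inr (.inl (i, ⟨v, j⟩))
  | .av v j => .inr (.inr (.inl ⟨v, j⟩))
  | .vy v i => .inr (.inr (.inr (.inl (v, i))))
  | .yb i v j => .inr (.inr (.inr (.inr (.inl (i, ⟨v, j⟩)))))
  | .bv v j => .inr (.inr (.inr (.inr (.inr ⟨v, j⟩))))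

instance [Finite V] : Finite (GadIdx V ℓ d) := by
  apply Finite.of_injective giEnc
  intro a b hab
  cases a <;> cases b <;> simp_all [giEnc]

private def hvEnc : HVert V ℓ d →
    V ⊕ Fin ℓ ⊕ Fin ℓ ⊕ (Σ v, Fin (d v)) ⊕ (Σ v, Fin (d v)) ⊕ (GadIdx V ℓ d × GadVert)
  | .orig v => .inl v
  | .xx i => .inr (.inl i)
  | .yy i => .inr (.inr (.inl i))
  | .aa v j => .inr (.inr (.inr (.inl ⟨v, j⟩)))
  | .bb v j => .inr (.inr (.inr (.inr (.inl ⟨v, j⟩))))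
  | .gad D w => .inr (.inr (.inr (.inr (.inr (D, w)))))

instance [Finite V] : Finite (HVert V ℓ d) := by
  apply Finite.of_injective hvEnc
  intro a b hab
  cases a <;> cases b <;> simp_all [hvEnc]

/-! Basic activation lemmas -/

lemma activeAt_mono_succ (G : SimpleGraph W) (τ : W → ℕ) (S : Set W) (i : ℕ) :
    activeAt G τ S i ⊆ activeAt G τ S (i + 1) :=
  Set.subset_union_left

lemma activeAt_mono (G : SimpleGraph W) (τ : W → ℕ) (S : Set W) {i j : ℕ} (h : i ≤ j) :
    activeAt G τ S i ⊆ activeAt G τ S j := by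
  induction j with
  | zero => simp_all
  | succ j ih =>
    rcases Nat.lt_or_ge i (j+1) with h' | h'
    · exact (ih (by omega)).trans (activeAt_mono_succ G τ S j)
    · have : i = j + 1 := by omega
      subst this; rfl

lemma subset_activeSet (G : SimpleGraph W) (τ : W → ℕ) (S : Set W) :
    S ⊆ activeSet G τ S :=
  fun x hx => Set.mem_iUnion.2 ⟨0, hx⟩

lemma activeAt_subset_activeSet (G : SimpleGraph W) (τ : W → ℕ) (S : Set W) (i : ℕ) :
    activeAt G τ S i ⊆ activeSet G τ S :=
  fun x hx => Set.mem_iUnion.2 ⟨i, hx⟩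

lemma exists_stage (G : SimpleGraph W) (τ : W → ℕ) (S : Set W) {F : Set W}
    (hfin : F.Finite) (hF : F ⊆ activeSet G τ S) : ∃ i, F ⊆ activeAt G τ S i := by
  revert hF
  refine Set.Finite.induction_on
    (motive := fun F _ => F ⊆ activeSet G τ S → ∃ i, F ⊆ activeAt G τ S i) F hfin
    (fun _ => ⟨0, by simp⟩) ?_
  · rintro a F ha hFfin ih h
    obtain ⟨i, hi⟩ := ih (fun x hx => h (Set.mem_insert_of_mem _ hx))
    obtain ⟨j, hj⟩ := Set.mem_iUnion.1 (h (Set.mem_insert _ _))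
    exact ⟨max i j, Set.insert_subset
      (activeAt_mono G τ S (le_max_right i j) hj)
      (hi.trans (activeAt_mono G τ S (le_max_left i j)))⟩

lemma grow [Finite W] (G : SimpleGraph W) (τ : W → ℕ) (S : Set W) {p : W} (F : Set W)
    (h1 : F ⊆ activeSet G τ S) (h2 : F ⊆ G.neighborSet p) (h3 : τ p ≤ F.ncard) :
    p ∈ activeSet G τ S := by
  obtain ⟨i, hi⟩ := exists_stage G τ S (Set.toFinite F) h1
  refine Set.mem_iUnion.2 ⟨i + 1, Or.inr ?_⟩
  have : F ⊆ G.neighborSet p ∩ activeAt G τ S i := Set.subset_inter h2 hi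
  exact le_trans h3 (Set.ncard_le_ncard this (Set.toFinite _))

lemma grow1 [Finite W] (G : SimpleGraph W) (τ : W → ℕ) (S : Set W) {p q : W}
    (hq : q ∈ activeSet G τ S) (hadj : G.Adj p q) (hτ : τ p ≤ 1) :
    p ∈ activeSet G τ S := by
  refine grow G τ S {q} (by simpa) (by simpa using hadj) (by simpa)

lemma grow2 [Finite W] (G : SimpleGraph W) (τ : W → ℕ) (S : Set W) {p q r : W}
    (hq : q ∈ activeSet G τ S) (hr : r ∈ activeSet G τ S) (hqr : q ≠ r)
    (h1 : G.Adj p q) (h2 : G.Adj p r) (hτ : τ p ≤ 2) :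
    p ∈ activeSet G τ S := by
  refine grow G τ S {q, r} ?_ ?_ ?_
  · intro x hx; rcases hx with rfl | rfl; exact hq; exact hr
  · intro x hx; rcases hx with rfl | rfl; exact h1; exact h2
  · rwa [Set.ncard_pair hqr]

lemma growRange [Finite W] {ι : Type*} (G : SimpleGraph W) (τ : W → ℕ) (S : Set W) {p : W}
    (f : ι → W) (hinj : Function.Injective f)
    (hmem : ∀ i, f i ∈ activeSet G τ S) (hadj : ∀ i, G.Adj p (f i))
    (hτ : τ p ≤ Nat.card ι) : p ∈ activeSet G τ S := by
  refine grow G τ S (Set.range f) ?_ ?_ ?_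
  · rintro x ⟨i, rfl⟩; exact hmem i
  · rintro x ⟨i, rfl⟩; exact hadj i
  · rwa [← Set.image_univ, Set.ncard_image_of_injective _ hinj, Set.ncard_univ]

lemma activeAt_mono_set [Finite W] (G : SimpleGraph W) (τ : W → ℕ) {S S' : Set W}
    (h : S ⊆ S') (i : ℕ) : activeAt G τ S i ⊆ activeAt G τ S' i := by
  induction i with
  | zero => exact h
  | succ i ih =>
    rintro x (hx | hx)
    · exact Or.inl (ih hx)
    · refine Or.inr (le_trans hx (Set.ncard_le_ncard ?_ (Set.toFinite _)))
      exact Set.inter_subset_inter_right _ ih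

lemma activeSet_mono_set [Finite W] (G : SimpleGraph W) (τ : W → ℕ) {S S' : Set W}
    (h : S ⊆ S') : activeSet G τ S ⊆ activeSet G τ S' := by
  intro x hx
  obtain ⟨i, hi⟩ := Set.mem_iUnion.1 hx
  exact Set.mem_iUnion.2 ⟨i, activeAt_mono_set G τ h i hi⟩

lemma isTargetSet_mono [Finite W] (G : SimpleGraph W) (τ : W → ℕ) {S S' : Set W}
    (h : S ⊆ S') (hS : IsTargetSet G τ S) : IsTargetSet G τ S' :=
  Set.eq_univ_of_univ_subset (hS ▸ activeSet_mono_set G τ h)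

end TSS
end Aux

section Aux2
namespace TSS
variable {V : Type*} {ℓ : ℕ} {d : V → ℕ} {G : SimpleGraph V} {τ : V → ℕ} {n : ℕ}

lemma orig_inj : Function.Injective (HVert.orig : V → HVert V ℓ d) := by
  intro a b h; simpa using h

lemma gadTail_ne_gad (D D' : GadIdx V ℓ d) (w : GadVert) : gadTail D ≠ .gad D' w := by
  cases D <;> simp [gadTail]

lemma gadHead_ne_gad (D D' : GadIdx V ℓ d) (w : GadVert) : gadHead D ≠ .gad D' w := by
  cases D <;> simp [gadHead]

lemma adjH {p q : HVert V ℓ d} (h : p ≠ q) (hr : HRel G ℓ d p q) :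
    (graphH G ℓ d).Adj p q := ⟨h, Or.inl hr⟩

lemma adj_tail_t (D : GadIdx V ℓ d) : (graphH G ℓ d).Adj (gadTail D) (.gad D .t) :=
  adjH (gadTail_ne_gad D D .t) (.inr (.inr (.inr (.inl ⟨D, rfl, rfl⟩))))

lemma adj_head_h (D : GadIdx V ℓ d) : (graphH G ℓ d).Adj (gadHead D) (.gad D .h) :=
  adjH (gadHead_ne_gad D D .h) (.inr (.inr (.inr (.inr ⟨D, rfl, rfl⟩))))

lemma adj_t_b1 (D : GadIdx V ℓ d) : (graphH G ℓ d).Adj (.gad D .t) (.gad D .b1) :=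
  adjH (by simp) (.inr (.inl ⟨D, rfl, Or.inl rfl⟩))

lemma adj_t_b2 (D : GadIdx V ℓ d) : (graphH G ℓ d).Adj (.gad D .t) (.gad D .b2) :=
  adjH (by simp) (.inr (.inl ⟨D, rfl, Or.inr rfl⟩))

lemma adj_h_b1 (D : GadIdx V ℓ d) : (graphH G ℓ d).Adj (.gad D .h) (.gad D .b1) :=
  adjH (by simp) (.inr (.inr (.inl ⟨D, rfl, Or.inl rfl⟩)))

lemma adj_h_b2 (D : GadIdx V ℓ d) : (graphH G ℓ d).Adj (.gad D .h) (.gad D .b2) :=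
  adjH (by simp) (.inr (.inr (.inl ⟨D, rfl, Or.inr rfl⟩)))

lemma adj_orig {u v : V} (h : G.Adj u v) :
    (graphH G ℓ d).Adj (.orig u) (.orig v) :=
  adjH (by simp [h.ne]) (.inl ⟨u, v, h, rfl, rfl⟩)

variable [Finite V]

lemma gadget_fire (S : Set (HVert V ℓ d)) (D : GadIdx V ℓ d)
    (h : gadTail D ∈ activeSet (graphH G ℓ d) (tauH τ n ℓ d) S) :
    HVert.gad D .t ∈ activeSet (graphH G ℓ d) (tauH τ n ℓ d) S ∧
    HVert.gad D .b1 ∈ activeSet (graphH G ℓ d) (tauH τ n ℓ d) S ∧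
    HVert.gad D .b2 ∈ activeSet (graphH G ℓ d) (tauH τ n ℓ d) S ∧
    HVert.gad D .h ∈ activeSet (graphH G ℓ d) (tauH τ n ℓ d) S := by
  have ht := grow1 _ _ S h (adj_tail_t D).symm (le_refl 1)
  have hb1 := grow1 _ _ S ht (adj_t_b1 D).symm (le_refl 1)
  have hb2 := grow1 _ _ S ht (adj_t_b2 D).symm (le_refl 1)
  have hh := grow2 _ _ S hb1 hb2 (by simp) (adj_h_b1 D) (adj_h_b2 D) (le_refl 2)
  exact ⟨ht, hb1, hb2, hh⟩

lemma aa_active (S : Set (HVert V ℓ d))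
    (h : ∀ i : Fin ℓ, HVert.xx i ∈ activeSet (graphH G ℓ d) (tauH τ n ℓ d) S)
    (v : V) (j : Fin (d v)) :
    HVert.aa v j ∈ activeSet (graphH G ℓ d) (tauH τ n ℓ d) S := by
  refine growRange _ _ S (fun i : Fin ℓ => HVert.gad (.xa i v j) .h) ?_ ?_ ?_ ?_
  · intro a b hab; simpa using hab
  · exact fun i => (gadget_fire S (.xa i v j) (h i)).2.2.2
  · exact fun i => adj_head_h (.xa i v j)
  · simp [tauH, Nat.card_eq_fintype_card]

lemma bb_active (S : Set (HVert V ℓ d))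
    (h : ∀ i : Fin ℓ, HVert.yy i ∈ activeSet (graphH G ℓ d) (tauH τ n ℓ d) S)
    (v : V) (j : Fin (d v)) :
    HVert.bb v j ∈ activeSet (graphH G ℓ d) (tauH τ n ℓ d) S := by
  refine growRange _ _ S (fun i : Fin ℓ => HVert.gad (.yb i v j) .h) ?_ ?_ ?_ ?_
  · intro a b hab; simpa using hab
  · exact fun i => (gadget_fire S (.yb i v j) (h i)).2.2.2
  · exact fun i => adj_head_h (.yb i v j)
  · simp [tauH, Nat.card_eq_fintype_card]

lemma origs_of_X (hτd : ∀ v, τ v ≤ d v) (S : Set (HVert V ℓ d))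
    (h : ∀ i : Fin ℓ, HVert.xx i ∈ activeSet (graphH G ℓ d) (tauH τ n ℓ d) S) (v : V) :
    HVert.orig v ∈ activeSet (graphH G ℓ d) (tauH τ n ℓ d) S := by
  refine growRange _ _ S (fun j : Fin (d v) => HVert.gad (.av v j) .h) ?_ ?_ ?_ ?_
  · intro a b hab; simpa using hab
  · exact fun j => (gadget_fire S (.av v j) (aa_active S h v j)).2.2.2
  · exact fun j => adj_head_h (.av v j)
  · show τ v ≤ _
    simpa [Nat.card_eq_fintype_card] using hτd v

lemma origs_of_Y (hτd : ∀ v, τ v ≤ d v) (S : Set (HVert V ℓ d))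
    (h : ∀ i : Fin ℓ, HVert.yy i ∈ activeSet (graphH G ℓ d) (tauH τ n ℓ d) S) (v : V) :
    HVert.orig v ∈ activeSet (graphH G ℓ d) (tauH τ n ℓ d) S := by
  refine growRange _ _ S (fun j : Fin (d v) => HVert.gad (.bv v j) .h) ?_ ?_ ?_ ?_
  · intro a b hab; simpa using hab
  · exact fun j => (gadget_fire S (.bv v j) (bb_active S h v j)).2.2.2
  · exact fun j => adj_head_h (.bv v j)
  · show τ v ≤ _
    simpa [Nat.card_eq_fintype_card] using hτd v

lemma full_of_origs (hn : n ≤ Nat.card V) (S : Set (HVert V ℓ d))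
    (h : ∀ v : V, HVert.orig v ∈ activeSet (graphH G ℓ d) (tauH τ n ℓ d) S) (p : HVert V ℓ d) :
    p ∈ activeSet (graphH G ℓ d) (tauH τ n ℓ d) S := by
  have hx : ∀ i : Fin ℓ, HVert.xx i ∈ activeSet (graphH G ℓ d) (tauH τ n ℓ d) S := by
    intro i
    refine growRange _ _ S (fun v : V => HVert.gad (.vx v i) .h) ?_ ?_ ?_ hn
    · intro a b hab; simpa using hab
    · exact fun v => (gadget_fire S (.vx v i) (h v)).2.2.2
    · exact fun v => adj_head_h (.vx v i)
  have hy : ∀ i : Fin ℓ, HVert.yy i ∈ activeSet (graphH G ℓ d) (tauH τ n ℓ d) S := by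
    intro i
    refine growRange _ _ S (fun v : V => HVert.gad (.vy v i) .h) ?_ ?_ ?_ hn
    · intro a b hab; simpa using hab
    · exact fun v => (gadget_fire S (.vy v i) (h v)).2.2.2
    · exact fun v => adj_head_h (.vy v i)
  have ha := aa_active S hx
  have hb := bb_active S hy
  have htail : ∀ D : GadIdx V ℓ d, gadTail D ∈ activeSet (graphH G ℓ d) (tauH τ n ℓ d) S := by
    intro D
    cases D with
    | vx v i => exact h v
    | xa i v j => exact hx i
    | av v j => exact ha v j
    | vy v i => exact h v
    | yb i v j => exact hy i
    | bv v j => exact hb v j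
  cases p with
  | orig v => exact h v
  | xx i => exact hx i
  | yy i => exact hy i
  | aa v j => exact ha v j
  | bb v j => exact hb v j
  | gad D w =>
    obtain ⟨h1, h2, h3, h4⟩ := gadget_fire S D (htail D)
    cases w
    · exact h1
    · exact h4
    · exact h2
    · exact h3

lemma origs_of_target {S : Set V} (hS : IsTargetSet G τ S) (v : V) :
    HVert.orig v ∈ activeSet (graphH G ℓ d) (tauH τ n ℓ d) (HVert.orig '' S) := by
  have key : ∀ i, ∀ u : V, u ∈ activeAt G τ S i →
      HVert.orig u ∈ activeAt (graphH G ℓ d) (tauH τ n ℓ d) (HVert.orig '' S) i := by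
    intro i
    induction i with
    | zero => exact fun u hu => ⟨u, hu, rfl⟩
    | succ i ih =>
      rintro u (hu | hu)
      · exact Or.inl (ih u hu)
      · refine Or.inr ?_
        show τ u ≤ _
        calc τ u ≤ (G.neighborSet u ∩ activeAt G τ S i).ncard := hu
          _ = (HVert.orig '' (G.neighborSet u ∩ activeAt G τ S i) : Set (HVert V ℓ d)).ncard :=
              (Set.ncard_image_of_injective _ orig_inj).symm
          _ ≤ _ := by
              refine Set.ncard_le_ncard ?_ (Set.toFinite _)
              rintro _ ⟨w, ⟨hw1, hw2⟩, rfl⟩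
              exact ⟨adj_orig hw1, ih w hw2⟩
  have hv : v ∈ activeSet G τ S := hS ▸ Set.mem_univ v
  obtain ⟨i, hi⟩ := Set.mem_iUnion.1 hv
  exact Set.mem_iUnion.2 ⟨i, key i v hi⟩

end TSS
end Aux2

section Aux3
namespace TSS
variable {W : Type*} [Finite W]

lemma exists_up (G : SimpleGraph W) (τ : W → ℕ) {Q : Set W} :
    ∀ (N : ℕ) (P : Set W), P ⊆ Q → (∀ R, P ⊆ R → R ⊆ Q → IsTargetSet G τ R) →
      (Q \ P).ncard = N →
      ∃ T Sfam, IsReconfSeq G τ P Q T Sfam ∧ seqSize T Sfam ≤ Q.ncard := by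
  intro N
  induction N with
  | zero =>
    intro P hPQ htgt hN
    have hQP : Q ⊆ P := Set.diff_eq_empty.1 ((Set.ncard_eq_zero (Set.toFinite _)).1 hN)
    obtain rfl : P = Q := Set.Subset.antisymm hPQ hQP
    refine ⟨0, fun _ => P, ⟨rfl, rfl, ?_, ?_⟩, ?_⟩
    · exact fun t _ => htgt P Set.Subset.rfl Set.Subset.rfl
    · intro t ht; omega
    · simp [seqSize]
  | succ N ih =>
    intro P hPQ htgt hN
    have hne : (Q \ P).Nonempty := by
      rw [← Set.ncard_pos (Set.toFinite _)] at *; omega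
    obtain ⟨x, hxQ, hxP⟩ := hne
    have hP'Q : insert x P ⊆ Q := Set.insert_subset hxQ hPQ
    have hN' : (Q \ insert x P).ncard = N := by
      have heq : Q \ insert x P = (Q \ P) \ {x} := by
        ext y; simp [Set.mem_diff]; tauto
      rw [heq, Set.ncard_diff_singleton_of_mem ((Set.mem_diff x).2 ⟨hxQ, hxP⟩), hN]
      omega
    obtain ⟨T, Sfam, hseq, hsize⟩ :=
      ih (insert x P) hP'Q (fun R h1 h2 => htgt R ((Set.subset_insert x P).trans h1) h2) hN'
    refine ⟨T + 1, fun t => match t with | 0 => P | (t + 1) => Sfam t, ⟨rfl, ?_, ?_, ?_⟩, ?_⟩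
    · exact hseq.last
    · intro t ht
      match t with
      | 0 => exact htgt P Set.Subset.rfl hPQ
      | (t + 1) => exact hseq.target t (by omega)
    · intro t ht
      match t with
      | 0 =>
        show (symmDiff P (Sfam 0)).ncard = 1
        rw [hseq.head]
        have : symmDiff P (insert x P) = {x} := by
          ext y
          simp only [Set.mem_symmDiff, Set.mem_insert_iff, Set.mem_singleton_iff]
          constructor
          · rintro (⟨hy, h2⟩ | ⟨(rfl | hy), h2⟩) <;> tauto
          · rintro rfl; tauto
        rw [this, Set.ncard_singleton]
      | (t + 1) =>
        exact hseq.step t (by omega)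
    · refine Finset.sup_le fun t ht => ?_
      match t with
      | 0 => exact Set.ncard_le_ncard hPQ (Set.toFinite _)
      | (t + 1) =>
        refine le_trans ?_ hsize
        exact Finset.le_sup (f := fun t => (Sfam t).ncard)
          (Finset.mem_range.2 (by simp at ht; omega))

lemma reconf_rev {G : SimpleGraph W} {τ : W → ℕ} {P Q : Set W} {T : ℕ} {Sfam : ℕ → Set W}
    (h : IsReconfSeq G τ P Q T Sfam) :
    ∃ Sfam', IsReconfSeq G τ Q P T Sfam' ∧ seqSize T Sfam' ≤ seqSize T Sfam := by
  refine ⟨fun t => Sfam (T - t), ⟨by simpa using h.last, by simpa using h.head, ?_, ?_⟩, ?_⟩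
  · exact fun t _ => h.target (T - t) (Nat.sub_le _ _)
  · intro t ht
    have h1 : T - t = (T - (t + 1)) + 1 := by omega
    rw [h1, symmDiff_comm]
    exact h.step (T - (t + 1)) (by omega)
  · refine Finset.sup_le fun t ht => ?_
    exact Finset.le_sup (f := fun t => (Sfam t).ncard)
      (Finset.mem_range.2 (by omega))

lemma reconf_trans {G : SimpleGraph W} {τ : W → ℕ} {P Q R : Set W} {T1 T2 : ℕ}
    {S1 S2 : ℕ → Set W} (h1 : IsReconfSeq G τ P Q T1 S1) (h2 : IsReconfSeq G τ Q R T2 S2) :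
    ∃ T S, IsReconfSeq G τ P R T S ∧ seqSize T S ≤ max (seqSize T1 S1) (seqSize T2 S2) := by
  refine ⟨T1 + T2, fun t => if t < T1 then S1 t else S2 (t - T1), ⟨?_, ?_, ?_, ?_⟩, ?_⟩
  · by_cases h : 0 < T1
    · simp only [if_pos h]; exact h1.head
    · have hT1 : T1 = 0 := by omega
      have : Q = P := by rw [← h1.last, hT1, h1.head]
      simp only [if_neg h, Nat.zero_sub, h2.head]
      exact this
  · rw [if_neg (by omega), Nat.add_sub_cancel_left]
    exact h2.last
  · intro t ht
    by_cases h : t < T1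
    · rw [if_pos h]; exact h1.target t (le_of_lt h)
    · rw [if_neg h]; exact h2.target (t - T1) (by omega)
  · intro t ht
    by_cases hA : t + 1 < T1
    · rw [if_pos (by omega), if_pos hA]
      exact h1.step t (by omega)
    · by_cases hB : t < T1
      · rw [if_pos hB, if_neg hA]
        have he : t + 1 - T1 = 0 := by omega
        have hT1 : T1 = t + 1 := by omega
        rw [he, h2.head, ← h1.last, hT1]
        exact h1.step t (by omega)
      · rw [if_neg hB, if_neg (by omega)]
        have he : t + 1 - T1 = (t - T1) + 1 := by omega
        rw [he]
        exact h2.step (t - T1) (by omega)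
  · refine Finset.sup_le fun t ht => ?_
    simp only [Finset.mem_range] at ht
    show (if t < T1 then S1 t else S2 (t - T1)).ncard ≤ _
    by_cases h : t < T1
    · rw [if_pos h]
      exact le_trans (Finset.le_sup (f := fun t => (S1 t).ncard)
        (Finset.mem_range.2 (by omega))) (le_max_left _ _)
    · rw [if_neg h]
      exact le_trans (Finset.le_sup (f := fun t => (S2 t).ncard)
        (Finset.mem_range.2 (by omega))) (le_max_right _ _)

end TSS
end Aux3


open TSS in
/-- Completeness: if `opt(G) ≤ k_c`, then `opt_H(X ⇝ Y) ≤ k_c + ℓ`. -/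
theorem stmt6 {V : Type*} [Fintype V] (G : SimpleGraph V) [DecidableRel G.Adj] (τ : V → ℕ)
    (ℓ : ℕ) (hℓ : 1 ≤ ℓ) (hiso : ∀ v : V, 0 < G.degree v) (hτ : ∀ v : V, τ v ≤ G.degree v)
    (kc : ℕ) (hopt : optTS G τ ≤ kc) :
    optReconf (graphH G ℓ (fun v => G.degree v)) (tauH τ (Fintype.card V) ℓ (fun v => G.degree v))
      (XSet V ℓ (fun v => G.degree v)) (YSet V ℓ (fun v => G.degree v)) ≤ kc + ℓ := by
  classical
  set d : V → ℕ := fun v => G.degree v with hd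
  set n : ℕ := Fintype.card V with hn0
  -- an optimal target set of G
  have hne : {m | ∃ S : Set V, IsTargetSet G τ S ∧ S.ncard = m}.Nonempty :=
    ⟨(Set.univ : Set V).ncard, Set.univ, Set.eq_univ_of_univ_subset (subset_activeSet G τ _), rfl⟩
  obtain ⟨S0, hS0, hScard⟩ := Nat.sInf_mem hne
  have hcard : S0.ncard ≤ kc := le_trans (le_of_eq hScard) hopt
  set S' : Set (HVert V ℓ d) := HVert.orig '' S0 with hS'
  have hnle : n ≤ Nat.card V := le_of_eq (Nat.card_eq_fintype_card (α := V)).symm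
  -- target set facts
  have tgtX : ∀ R : Set (HVert V ℓ d), XSet V ℓ d ⊆ R →
      IsTargetSet (graphH G ℓ d) (tauH τ n ℓ d) R := by
    intro R hR
    refine Set.eq_univ_of_forall fun p => full_of_origs hnle R ?_ p
    exact origs_of_X hτ R fun i => subset_activeSet _ _ _ (hR ⟨i, rfl⟩)
  have tgtY : ∀ R : Set (HVert V ℓ d), YSet V ℓ d ⊆ R →
      IsTargetSet (graphH G ℓ d) (tauH τ n ℓ d) R := by
    intro R hR
    refine Set.eq_univ_of_forall fun p => full_of_origs hnle R ?_ p
    exact origs_of_Y hτ R fun i => subset_activeSet _ _ _ (hR ⟨i, rfl⟩)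
  have tgtS' : ∀ R : Set (HVert V ℓ d), S' ⊆ R →
      IsTargetSet (graphH G ℓ d) (tauH τ n ℓ d) R := by
    intro R hR
    refine isTargetSet_mono _ _ hR ?_
    exact Set.eq_univ_of_forall fun p => full_of_origs hnle S' (origs_of_target hS0) p
  -- cardinalities
  have hX : (XSet V ℓ d).ncard = ℓ := by
    rw [XSet, ← Set.image_univ,
      Set.ncard_image_of_injective _ (fun a b hab => by simpa using hab : Function.Injective
        (HVert.xx : Fin ℓ → HVert V ℓ d)), Set.ncard_univ, Nat.card_eq_fintype_card,
      Fintype.card_fin]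
  have hY : (YSet V ℓ d).ncard = ℓ := by
    rw [YSet, ← Set.image_univ,
      Set.ncard_image_of_injective _ (fun a b hab => by simpa using hab : Function.Injective
        (HVert.yy : Fin ℓ → HVert V ℓ d)), Set.ncard_univ, Nat.card_eq_fintype_card,
      Fintype.card_fin]
  have hS'card : S'.ncard ≤ kc := by
    rw [hS', Set.ncard_image_of_injective _ orig_inj]; exact hcard
  have hQ1 : (XSet V ℓ d ∪ S').ncard ≤ kc + ℓ := by
    refine le_trans (Set.ncard_union_le _ _) ?_
    rw [hX]; omega
  have hQ2 : (S' ∪ YSet V ℓ d).ncard ≤ kc + ℓ := by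
    refine le_trans (Set.ncard_union_le _ _) ?_
    rw [hY]; omega
  -- the four phases
  obtain ⟨T1, F1, hseq1, hsz1⟩ := exists_up (graphH G ℓ d) (tauH τ n ℓ d)
    ((XSet V ℓ d ∪ S') \ XSet V ℓ d).ncard (XSet V ℓ d) Set.subset_union_left
    (fun R h1 _ => tgtX R h1) rfl
  obtain ⟨T2, F2, hseq2, hsz2⟩ := exists_up (graphH G ℓ d) (tauH τ n ℓ d)
    ((XSet V ℓ d ∪ S') \ S').ncard S' Set.subset_union_right
    (fun R h1 _ => tgtS' R h1) rfl
  obtain ⟨F2r, hseq2r, hsz2r⟩ := reconf_rev hseq2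
  obtain ⟨T3, F3, hseq3, hsz3⟩ := exists_up (graphH G ℓ d) (tauH τ n ℓ d)
    ((S' ∪ YSet V ℓ d) \ S').ncard S' Set.subset_union_left
    (fun R h1 _ => tgtS' R h1) rfl
  obtain ⟨T4, F4, hseq4, hsz4⟩ := exists_up (graphH G ℓ d) (tauH τ n ℓ d)
    ((S' ∪ YSet V ℓ d) \ YSet V ℓ d).ncard (YSet V ℓ d) Set.subset_union_right
    (fun R h1 _ => tgtY R h1) rfl
  obtain ⟨F4r, hseq4r, hsz4r⟩ := reconf_rev hseq4
  obtain ⟨Ta, Fa, hseqa, hsza⟩ := reconf_trans hseq1 hseq2r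
  obtain ⟨Tb, Fb, hseqb, hszb⟩ := reconf_trans hseq3 hseq4r
  obtain ⟨T, F, hseq, hsz⟩ := reconf_trans hseqa hseqb
  have hbound : seqSize T F ≤ kc + ℓ := by
    refine le_trans hsz (max_le (le_trans hsza (max_le ?_ ?_)) (le_trans hszb (max_le ?_ ?_)))
    · exact le_trans hsz1 hQ1
    · exact le_trans hsz2r (le_trans hsz2 hQ1)
    · exact le_trans hsz3 hQ2
    · exact le_trans hsz4r (le_trans hsz4 hQ2)
  exact le_trans (Nat.sInf_le ⟨T, F, hseq, rfl⟩) hbound
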